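/- Let 0<q<1, w∈ℂ∖{0}, and u := |w|·q/(1−q²). For n≥1 define d_n := 4·(u/q)^{2n} · Σ_{k=0, k≠n}^{2n} ((−1)^k/(k!·(2n−k)!)) · q^{2k}·(1−q^{2(k−n)})^{−2}. Then for every t>0, Σ_{n=1}^∞ |d_n|·t^{2n} ≤ 4·(1+q⁴)/(1−q²)² · (cosh(|w|·(1+q²)·t/(1−q²)) − 1); in particular the series Σ_{n=1}^∞ d_n·t^{2n} converges absolutely for every t>0. -/

import Mathlib

open Real

lemma inv_sq_bound (q : ℝ) (hq : 0 < q) (hq1 : q < 1) (k n : ℕ) (hkn : k ≠ n) :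
    ((1 - q ^ (2 * ((k : ℤ) - (n : ℤ)))) ^ 2)⁻¹ ≤ (1 + q ^ 4) / (1 - q ^ 2) ^ 2 := by
  have hq2 : q ^ 2 < 1 := by nlinarith
  have h1q2 : (0:ℝ) < 1 - q ^ 2 := by linarith
  have hq4 : (0:ℝ) ≤ q ^ 4 := by positivity
  rcases lt_or_gt_of_ne hkn with h | h
  · -- k < n : exponent negative
    have hm : 2 * ((k : ℤ) - (n : ℤ)) = -((2 * (n - k) : ℕ) : ℤ) := by
      push_cast [Nat.cast_sub h.le]; ring
    rw [hm, zpow_neg, zpow_natCast]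
    have hle : q ^ (2 * (n - k)) ≤ q ^ 2 :=
      pow_le_pow_of_le_one hq.le hq1.le (by omega)
    have hpos : (0:ℝ) < q ^ (2 * (n - k)) := pow_pos hq _
    have hq2pos : (0:ℝ) < q ^ 2 := by positivity
    have hinv : (q ^ 2)⁻¹ ≤ (q ^ (2 * (n - k)))⁻¹ := inv_anti₀ hpos hle
    have hb : (1 - q ^ 2) / q ^ 2 ≤ (q ^ (2 * (n - k)))⁻¹ - 1 := by
      have he : (1 - q ^ 2) / q ^ 2 = (q ^ 2)⁻¹ - 1 := by field_simp
      linarith [he]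
    have hbpos : (0:ℝ) < (1 - q ^ 2) / q ^ 2 := by positivity
    have hsq : ((1 - q ^ 2) / q ^ 2) ^ 2 ≤ (1 - (q ^ (2 * (n - k)))⁻¹) ^ 2 := by
      have he : (1 - (q ^ (2 * (n - k)))⁻¹) ^ 2 = ((q ^ (2 * (n - k)))⁻¹ - 1) ^ 2 := by ring
      rw [he]; exact pow_le_pow_left₀ hbpos.le hb 2
    calc ((1 - (q ^ (2 * (n - k)))⁻¹) ^ 2)⁻¹ ≤ (((1 - q ^ 2) / q ^ 2) ^ 2)⁻¹ :=
          inv_anti₀ (by positivity) hsq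
      _ = q ^ 4 / (1 - q ^ 2) ^ 2 := by
          rw [div_pow, inv_div]
          congr 1; ring
      _ ≤ (1 + q ^ 4) / (1 - q ^ 2) ^ 2 :=
          div_le_div_of_nonneg_right (by linarith) (by positivity) |>.trans_eq rfl
  · -- k > n
    have hm : 2 * ((k : ℤ) - (n : ℤ)) = ((2 * (k - n) : ℕ) : ℤ) := by
      push_cast [Nat.cast_sub h.le]; ring
    rw [hm, zpow_natCast]
    have hle : q ^ (2 * (k - n)) ≤ q ^ 2 :=
      pow_le_pow_of_le_one hq.le hq1.le (by omega)
    have hsq : (1 - q ^ 2) ^ 2 ≤ (1 - q ^ (2 * (k - n))) ^ 2 :=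
      pow_le_pow_left₀ h1q2.le (by linarith) 2
    calc ((1 - q ^ (2 * (k - n))) ^ 2)⁻¹ ≤ ((1 - q ^ 2) ^ 2)⁻¹ :=
          inv_anti₀ (by positivity) hsq
      _ = 1 / (1 - q ^ 2) ^ 2 := by rw [one_div]
      _ ≤ (1 + q ^ 4) / (1 - q ^ 2) ^ 2 :=
          div_le_div_of_nonneg_right (by linarith) (by positivity)


lemma binom_sum (q : ℝ) (n : ℕ) :
    ∑ k ∈ Finset.range (2 * n + 1), q ^ (2 * k) / ((k.factorial : ℝ) * ((2 * n - k).factorial : ℝ))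
      = (1 + q ^ 2) ^ (2 * n) / ((2 * n).factorial : ℝ) := by
  rw [add_comm (1:ℝ), add_pow]
  rw [Finset.sum_div]
  apply Finset.sum_congr rfl
  intro k hk
  have hk' : k ≤ 2 * n := Nat.lt_succ_iff.mp (Finset.mem_range.mp hk)
  have hch : ((2*n).choose k * k.factorial * (2*n - k).factorial : ℕ) = (2*n).factorial :=
    Nat.choose_mul_factorial_mul_factorial hk'
  have hchR : (((2*n).choose k : ℝ)) * ((k.factorial : ℝ) * ((2*n-k).factorial : ℝ))
      = ((2*n).factorial : ℝ) := by
    push_cast [← hch]; ring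
  have h1 : ((2*n).factorial : ℝ) ≠ 0 := Nat.cast_ne_zero.mpr (Nat.factorial_ne_zero _)
  have h2 : ((k.factorial : ℝ) * ((2*n-k).factorial : ℝ)) ≠ 0 := by
    have := Nat.factorial_ne_zero k
    have := Nat.factorial_ne_zero (2*n-k)
    positivity
  rw [one_pow, mul_one, ← pow_mul]
  rw [div_eq_div_iff h2 h1, mul_comm 2 k]
  rw [mul_assoc, hchR]

/-- The Taylor coefficients `d_n` of the regular part of the Podleś heat trace:
`d_n = 4 (u/q)^{2n} Σ_{k=0,k≠n}^{2n} ((-1)^k/(k!(2n-k)!)) q^{2k} (1-q^{2(k-n)})^{-2}`,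
where `u = |w| q/(1-q²)`. -/
noncomputable def dCoef (q : ℝ) (w : ℂ) (n : ℕ) : ℝ :=
  4 * ((‖w‖ * q / (1 - q ^ 2)) / q) ^ (2 * n) *
    ∑ k ∈ (Finset.range (2 * n + 1)).erase n,
      ((-1 : ℝ) ^ k / ((k.factorial : ℝ) * ((2 * n - k).factorial : ℝ))) *
        q ^ (2 * k) * ((1 - q ^ (2 * ((k : ℤ) - (n : ℤ)))) ^ 2)⁻¹


lemma dCoef_abs_le (q : ℝ) (hq : 0 < q) (hq1 : q < 1) (w : ℂ) (n : ℕ) :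
    |dCoef q w n| ≤ 4 * ((1 + q ^ 4) / (1 - q ^ 2) ^ 2) *
      ((‖w‖ * (1 + q ^ 2) / (1 - q ^ 2)) ^ (2 * n) / ((2 * n).factorial : ℝ)) := by
  have hq2 : q ^ 2 < 1 := by nlinarith
  have h1q2 : (0:ℝ) < 1 - q ^ 2 := by linarith
  set C : ℝ := (1 + q ^ 4) / (1 - q ^ 2) ^ 2 with hC
  have hCpos : 0 < C := by positivity
  set A : ℝ := ‖w‖ / (1 - q ^ 2) with hA
  have hApos : 0 ≤ A := by positivity
  have hAeq : (‖w‖ * q / (1 - q ^ 2)) / q = A := by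
    rw [hA, div_div, mul_comm (1 - q ^ 2) q, ← div_div, mul_div_cancel_right₀ _ hq.ne']
  have hS : |∑ k ∈ (Finset.range (2 * n + 1)).erase n,
      ((-1 : ℝ) ^ k / ((k.factorial : ℝ) * ((2 * n - k).factorial : ℝ))) *
        q ^ (2 * k) * ((1 - q ^ (2 * ((k : ℤ) - (n : ℤ)))) ^ 2)⁻¹|
      ≤ C * ((1 + q ^ 2) ^ (2 * n) / ((2 * n).factorial : ℝ)) := by
    calc _ ≤ ∑ k ∈ (Finset.range (2 * n + 1)).erase n,
          |((-1 : ℝ) ^ k / ((k.factorial : ℝ) * ((2 * n - k).factorial : ℝ))) *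
            q ^ (2 * k) * ((1 - q ^ (2 * ((k : ℤ) - (n : ℤ)))) ^ 2)⁻¹| :=
          Finset.abs_sum_le_sum_abs _ _
      _ ≤ ∑ k ∈ (Finset.range (2 * n + 1)).erase n,
          C * (q ^ (2 * k) / ((k.factorial : ℝ) * ((2 * n - k).factorial : ℝ))) := by
          apply Finset.sum_le_sum
          intro k hk
          have hkn : k ≠ n := Finset.ne_of_mem_erase hk
          have hfac : (0:ℝ) < (k.factorial : ℝ) * ((2 * n - k).factorial : ℝ) := by
            have := Nat.factorial_pos k
            have := Nat.factorial_pos (2*n-k)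
            positivity
          rw [abs_mul, abs_mul, abs_div, abs_pow, abs_neg, abs_one, one_pow,
            abs_of_pos hfac, abs_of_nonneg (by positivity : (0:ℝ) ≤ q ^ (2*k)),
            abs_of_nonneg (by positivity : (0:ℝ) ≤ ((1 - q ^ (2 * ((k : ℤ) - (n : ℤ)))) ^ 2)⁻¹)]
          calc 1 / ((k.factorial : ℝ) * ((2 * n - k).factorial : ℝ)) * q ^ (2 * k) *
                ((1 - q ^ (2 * ((k : ℤ) - (n : ℤ)))) ^ 2)⁻¹
              ≤ 1 / ((k.factorial : ℝ) * ((2 * n - k).factorial : ℝ)) * q ^ (2 * k) * C := by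
                apply mul_le_mul_of_nonneg_left (inv_sq_bound q hq hq1 k n hkn) (by positivity)
            _ = C * (q ^ (2 * k) / ((k.factorial : ℝ) * ((2 * n - k).factorial : ℝ))) := by ring
      _ ≤ ∑ k ∈ Finset.range (2 * n + 1),
          C * (q ^ (2 * k) / ((k.factorial : ℝ) * ((2 * n - k).factorial : ℝ))) := by
          apply Finset.sum_le_sum_of_subset_of_nonneg (Finset.erase_subset _ _)
          intro k _ _
          have := Nat.factorial_pos k
          have := Nat.factorial_pos (2*n-k)
          positivity
      _ = C * ((1 + q ^ 2) ^ (2 * n) / ((2 * n).factorial : ℝ)) := by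
          rw [← Finset.mul_sum, binom_sum]
  rw [dCoef, hAeq, abs_mul, abs_mul, abs_of_nonneg (by norm_num : (0:ℝ) ≤ 4),
    abs_of_nonneg (by positivity : (0:ℝ) ≤ A ^ (2*n))]
  calc 4 * A ^ (2 * n) * |_root_.id (∑ k ∈ (Finset.range (2 * n + 1)).erase n,
        ((-1 : ℝ) ^ k / ((k.factorial : ℝ) * ((2 * n - k).factorial : ℝ))) *
          q ^ (2 * k) * ((1 - q ^ (2 * ((k : ℤ) - (n : ℤ)))) ^ 2)⁻¹)|
      ≤ 4 * A ^ (2 * n) * (C * ((1 + q ^ 2) ^ (2 * n) / ((2 * n).factorial : ℝ))) := by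
        apply mul_le_mul_of_nonneg_left _ (by positivity)
        simpa using hS
    _ = 4 * C * ((‖w‖ * (1 + q ^ 2) / (1 - q ^ 2)) ^ (2 * n) / ((2 * n).factorial : ℝ)) := by
        rw [hA, div_pow, mul_div_assoc, mul_pow, div_pow]
        field_simp

/-- for every `t > 0`,
`Σ_{n≥1} |d_n| t^{2n} ≤ 4 (1+q⁴)/(1-q²)² (cosh(|w|(1+q²)t/(1-q²)) − 1)`; in particular
the series `Σ_{n≥1} d_n t^{2n}` converges absolutely. -/
theorem dCoef_series_bound (q : ℝ) (hq : 0 < q) (hq1 : q < 1)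
    (w : ℂ) (hw : w ≠ 0) (t : ℝ) (ht : 0 < t) :
    Summable (fun n : ℕ => |dCoef q w (n + 1)| * t ^ (2 * (n + 1))) ∧
    (∑' n : ℕ, |dCoef q w (n + 1)| * t ^ (2 * (n + 1)))
      ≤ 4 * (1 + q ^ 4) / (1 - q ^ 2) ^ 2 *
        (Real.cosh (‖w‖ * (1 + q ^ 2) * t / (1 - q ^ 2)) - 1) := by
  set x : ℝ := ‖w‖ * (1 + q ^ 2) * t / (1 - q ^ 2) with hx
  set C : ℝ := (1 + q ^ 4) / (1 - q ^ 2) ^ 2 with hC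
  have hq2 : q ^ 2 < 1 := by nlinarith
  have h1q2 : (0:ℝ) < 1 - q ^ 2 := by linarith
  have hCpos : 0 < C := by positivity
  -- the cosh series
  have hcosh : HasSum (fun n : ℕ => x ^ (2 * n) / ((2 * n).factorial : ℝ)) (Real.cosh x) :=
    Real.hasSum_cosh x
  have hsum : Summable (fun n : ℕ => x ^ (2 * n) / ((2 * n).factorial : ℝ)) := hcosh.summable
  have hsum1 : Summable (fun n : ℕ => x ^ (2 * (n + 1)) / ((2 * (n + 1)).factorial : ℝ)) := by
    exact (summable_nat_add_iff 1).mpr hsum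
  have htsum1 : (∑' n : ℕ, x ^ (2 * (n + 1)) / ((2 * (n + 1)).factorial : ℝ))
      = Real.cosh x - 1 := by
    have h0 := Summable.tsum_eq_zero_add hsum
    rw [hcosh.tsum_eq] at h0
    simp only [Nat.mul_zero, Nat.factorial_zero, pow_zero, Nat.cast_one] at h0
    linarith [h0]
  -- termwise bound
  have hb : ∀ n : ℕ, |dCoef q w (n + 1)| * t ^ (2 * (n + 1))
      ≤ 4 * C * (x ^ (2 * (n + 1)) / ((2 * (n + 1)).factorial : ℝ)) := by
    intro n
    have h1 := dCoef_abs_le q hq hq1 w (n + 1)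
    have ht' : (0:ℝ) ≤ t ^ (2 * (n + 1)) := by positivity
    calc |dCoef q w (n + 1)| * t ^ (2 * (n + 1))
        ≤ (4 * C * ((‖w‖ * (1 + q ^ 2) / (1 - q ^ 2)) ^ (2 * (n+1)) /
            ((2 * (n+1)).factorial : ℝ))) * t ^ (2 * (n + 1)) :=
          mul_le_mul_of_nonneg_right h1 ht'
      _ = 4 * C * (x ^ (2 * (n + 1)) / ((2 * (n + 1)).factorial : ℝ)) := by
          have hy : ‖w‖ * (1 + q ^ 2) * t / (1 - q ^ 2)
              = ‖w‖ * (1 + q ^ 2) / (1 - q ^ 2) * t := by ring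
          rw [hx, hy, mul_pow]
          ring
  have hsumb : Summable (fun n : ℕ => 4 * C * (x ^ (2 * (n + 1)) / ((2 * (n + 1)).factorial : ℝ))) :=
    hsum1.mul_left _
  have hsumL : Summable (fun n : ℕ => |dCoef q w (n + 1)| * t ^ (2 * (n + 1))) := by
    apply Summable.of_nonneg_of_le (fun n => by positivity) hb hsumb
  refine ⟨hsumL, ?_⟩
  calc (∑' n : ℕ, |dCoef q w (n + 1)| * t ^ (2 * (n + 1)))
      ≤ ∑' n : ℕ, 4 * C * (x ^ (2 * (n + 1)) / ((2 * (n + 1)).factorial : ℝ)) :=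
        Summable.tsum_le_tsum hb hsumL hsumb
    _ = 4 * C * (Real.cosh x - 1) := by rw [tsum_mul_left, htsum1]
    _ = 4 * (1 + q ^ 4) / (1 - q ^ 2) ^ 2 * (Real.cosh x - 1) := by
        rw [hC]; ring
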